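/- For every abelian group G, n ≥ 1, and loops p, q : Ω K(G,n), applying the addition +_k : K(G,n) × K(G,n) → K(G,n) to the pair of loops yields ap²_{+_k}(p,q) = p · q, where · is path composition. Consequently, for any x : K(G,n) and any p, q : x = x one has p · q = q · p. -/

import Mathlib

open ContinuousMap unitInterval
open scoped Topology

noncomputable section
/-- The setoid of continuous maps up to (free) homotopy. -/
instance homotopicSetoid (X Y : Type) [TopologicalSpace X] [TopologicalSpace Y] :
    Setoid C(X, Y) :=
  ⟨ContinuousMap.Homotopic, ContinuousMap.Homotopic.equivalence⟩

/-- A (topological) model of the data of the family of Eilenberg-MacLane spaces `K(G,n)`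
of an abelian group `G`, together with their H-space addition `+ₖ` and inversion `-ₖ`.
`K(G,0)` is `G` itself (as a set, i.e. a discrete space), and for `n ≥ 1` the space
`K(G,n)` is characterised by `πₙ(K(G,n)) ≅ G` together with the vanishing of all of its
other homotopy groups.  The addition `+ₖ` is characterised by its two unit laws (this
determines it uniquely, by wedge-connectivity), and in degree `0` it is the addition
of `G`. -/
structure EMData (G : Type) [AddCommGroup G] : Type 1 where
  /-- the spaces `K(G,n)` -/
  K : ℕ → Type
  [topK : ∀ n, TopologicalSpace (K n)]
  /-- the basepoints `0ₖ` -/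
  pt : ∀ n, K n
  /-- `K(G,0)` is the group `G` itself, -/
  K0equiv : K 0 ≃ G
  /-- as a discrete space (a set). -/
  K0discrete : DiscreteTopology (K 0)
  K0pt : K0equiv (pt 0) = 0
  /-- `K(G,n)` is path connected for `n ≥ 1`, -/
  conn : ∀ n : ℕ, PathConnectedSpace (K (n + 1))
  /-- `πₙ(K(G,n)) ≅ G`, -/
  piSelf : ∀ n : ℕ, Nonempty (π_ (n + 1) (K (n + 1)) (pt (n + 1)) ≃* Multiplicative G)
  /-- and all other homotopy groups of `K(G,n)` vanish. -/
  piOther : ∀ n m : ℕ, m + 1 ≠ n → ∀ x : K n, Subsingleton (π_ (m + 1) (K n) x)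
  /-- the addition `+ₖ : K(G,n) × K(G,n) → K(G,n)` -/
  add : ∀ n, C(K n × K n, K n)
  /-- the inversion `-ₖ : K(G,n) → K(G,n)` -/
  neg : ∀ n, C(K n, K n)
  /-- `0ₖ +ₖ 0ₖ = 0ₖ` (this holds definitionally in the synthetic construction) -/
  add_pt : ∀ n, add n (pt n, pt n) = pt n
  /-- `+ₖ` is characterised by its unit laws: `0ₖ +ₖ y = y` … -/
  add_zero_left : ∀ n, ContinuousMap.Homotopic
    ((add n).comp ((ContinuousMap.const (K n) (pt n)).prodMk (ContinuousMap.id _)))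
    (ContinuousMap.id _)
  /-- … and `x +ₖ 0ₖ = x`. -/
  add_zero_right : ∀ n, ContinuousMap.Homotopic
    ((add n).comp ((ContinuousMap.id _).prodMk (ContinuousMap.const (K n) (pt n))))
    (ContinuousMap.id _)
  /-- in degree `0`, `+ₖ` is the addition of `G` -/
  add_K0 : ∀ x y : K 0, K0equiv (add 0 (x, y)) = K0equiv x + K0equiv y
  /-- and `-ₖ` is the negation of `G`. -/
  neg_K0 : ∀ x : K 0, K0equiv (neg 0 x) = - K0equiv x

attribute [instance] EMData.topK

/-- `ap²₊ₖ(p,q)` : applying the addition `+ₖ` to a pair of loops `p, q : Ω K(G,n)` gives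
the loop `t ↦ p t +ₖ q t` at `0ₖ` (using `0ₖ +ₖ 0ₖ = 0ₖ`). -/
def apAdd {G : Type} [AddCommGroup G] (E : EMData G) (n : ℕ)
    (p q : Path (E.pt n) (E.pt n)) : Path (E.pt n) (E.pt n) where
  toFun := fun t => E.add n (p t, q t)
  continuous_toFun := (E.add n).continuous.comp (p.continuous.prodMk q.continuous)
  source' := by simp [E.add_pt n]
  target' := by simp [E.add_pt n]


section AuxProof

open FundamentalGroupoid CategoryTheory
open scoped FundamentalGroupoid

attribute [local instance] Path.Homotopic.setoid

theorem EMAux.path_cast_rfl {X : Type} [TopologicalSpace X] {a b : X} (p : Path a b) :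
    p.cast rfl rfl = p := by
  ext t; rfl

theorem EMAux.homotopic_cast {X : Type} [TopologicalSpace X] {a b a' b' : X}
    (ha : a' = a) (hb : b' = b) {P Q : Path a b}
    (h : P.Homotopic Q) : (P.cast ha hb).Homotopic (Q.cast ha hb) := by
  subst ha; subst hb
  rwa [EMAux.path_cast_rfl, EMAux.path_cast_rfl]

theorem EMAux.trans_cast {X : Type} [TopologicalSpace X] {a b c a' b' c' : X}
    (ha : a' = a) (hb : b' = b) (hc : c' = c) (P : Path a b) (Q : Path b c) :
    (P.trans Q).cast ha hc = (P.cast ha hb).trans (Q.cast hb hc) := by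
  subst ha; subst hb; subst hc
  rw [EMAux.path_cast_rfl, EMAux.path_cast_rfl, EMAux.path_cast_rfl]

/-- Free homotopy conjugation: for a free homotopy `H : f ~ g` and a loop `p` at `x`,
`f ∘ p` followed by the track of `H` at `x` is homotopic to the track followed by `g ∘ p`. -/
theorem EMAux.conj_free {X : TopCat.{0}} {f g : C(X, X)} (H : ContinuousMap.Homotopy f g)
    {x : X} (p : Path x x) :
    ((p.map f.continuous).trans (H.evalAt x)).Homotopic
      ((H.evalAt x).trans (p.map g.continuous)) := by
  have h := (H.eq_diag_path (⟦p⟧ : fromTop x ⟶ fromTop x)).1.trans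
    (H.eq_diag_path (⟦p⟧ : fromTop x ⟶ fromTop x)).2.symm
  erw [FundamentalGroupoid.map_eq, FundamentalGroupoid.map_eq] at h
  replace h : (⟦(p.map f.continuous).trans (H.evalAt x)⟧ : Path.Homotopic.Quotient (f x) (g x)) =
      ⟦(H.evalAt x).trans (p.map g.continuous)⟧ := h
  exact Quotient.exact h

theorem EMAux.apAdd_congr {G : Type} [AddCommGroup G] (E : EMData G) (n : ℕ)
    {p p' q q' : Path (E.pt n) (E.pt n)}
    (hp : p.Homotopic p') (hq : q.Homotopic q') :
    (apAdd E n p q).Homotopic (apAdd E n p' q') := by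
  obtain ⟨H⟩ := hp; obtain ⟨K⟩ := hq
  refine ⟨⟨⟨⟨fun z => E.add n (H z, K z), ?_⟩, ?_, ?_⟩, ?_⟩⟩
  · exact (E.add n).continuous.comp
      ((H.continuous).prodMk (K.continuous))
  · intro t
    show E.add n (H (0, t), K (0, t)) = _
    rw [H.apply_zero, K.apply_zero]
    rfl
  · intro t
    show E.add n (H (1, t), K (1, t)) = _
    rw [H.apply_one, K.apply_one]
    rfl
  · intro t s hs
    show E.add n (H (t, s), K (t, s)) = _
    rw [H.eq_fst t hs, K.eq_fst t hs]
    rfl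

theorem EMAux.apAdd_trans {G : Type} [AddCommGroup G] (E : EMData G) (n : ℕ)
    (p p' q q' : Path (E.pt n) (E.pt n)) :
    apAdd E n (p.trans p') (q.trans q') = (apAdd E n p q).trans (apAdd E n p' q') := by
  ext t
  show E.add n ((p.trans p') t, (q.trans q') t) = _
  rw [Path.trans_apply, Path.trans_apply, Path.trans_apply]
  split_ifs <;> rfl

theorem EMAux.main {G : Type} [AddCommGroup G] (E : EMData G) (n : ℕ) :
    (∀ p q : Path (E.pt n) (E.pt n), (apAdd E n p q).Homotopic (p.trans q)) ∧
    (∀ u v : (fromTop (X := TopCat.of (E.K n)) (E.pt n) ⟶ fromTop (E.pt n)),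
      u ≫ v = v ≫ u) := by
  obtain ⟨H₁⟩ := E.add_zero_right n
  obtain ⟨H₂⟩ := E.add_zero_left n
  have hf₁ : ((E.add n).comp ((ContinuousMap.id _).prodMk
      (ContinuousMap.const (E.K n) (E.pt n)))) (E.pt n) = E.pt n := E.add_pt n
  have hf₂ : ((E.add n).comp ((ContinuousMap.const (E.K n) (E.pt n)).prodMk
      (ContinuousMap.id _))) (E.pt n) = E.pt n := E.add_pt n
  set α : Path (E.pt n) (E.pt n) := (H₁.evalAt (E.pt n)).cast hf₁.symm rfl with hα
  set β : Path (E.pt n) (E.pt n) := (H₂.evalAt (E.pt n)).cast hf₂.symm rfl with hβ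
  let A : (fromTop (X := TopCat.of (E.K n)) (E.pt n) ⟶ fromTop (E.pt n)) := ⟦α⟧
  let B : (fromTop (X := TopCat.of (E.K n)) (E.pt n) ⟶ fromTop (E.pt n)) := ⟦β⟧
  let μ : (fromTop (X := TopCat.of (E.K n)) (E.pt n) ⟶ fromTop (E.pt n)) →
      (fromTop (X := TopCat.of (E.K n)) (E.pt n) ⟶ fromTop (E.pt n)) →
      (fromTop (X := TopCat.of (E.K n)) (E.pt n) ⟶ fromTop (E.pt n)) :=
    Quotient.map₂ (apAdd E n)
      (fun _ _ hp _ _ hq => EMAux.apAdd_congr E n hp hq)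
  have hμc : ∀ u u' v v', μ (u ≫ u') (v ≫ v') = μ u v ≫ μ u' v' := by
    intro u u' v v'
    induction u using Quotient.inductionOn with | h p => ?_
    induction u' using Quotient.inductionOn with | h p' => ?_
    induction v using Quotient.inductionOn with | h q => ?_
    induction v' using Quotient.inductionOn with | h q' => ?_
    show (⟦apAdd E n (p.trans p') (q.trans q')⟧ :
      Path.Homotopic.Quotient (E.pt n) (E.pt n)) = ⟦(apAdd E n p q).trans (apAdd E n p' q')⟧
    rw [EMAux.apAdd_trans]
  have R2 : ∀ u, μ u (𝟙 _) ≫ A = A ≫ u := by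
    intro u
    induction u using Quotient.inductionOn with | h p => ?_
    have h := EMAux.conj_free (X := TopCat.of (E.K n)) H₁ p
    have h2 : p.map (ContinuousMap.id (E.K n)).continuous = p := by ext t; rfl
    rw [h2] at h
    have h' : ((p.map (((E.add n).comp ((ContinuousMap.id _).prodMk
        (ContinuousMap.const (E.K n) (E.pt n)))).continuous)).trans
        (H₁.evalAt (E.pt n))).Homotopic ((H₁.evalAt (E.pt n)).trans p) := h
    have h3 := EMAux.homotopic_cast hf₁.symm rfl h'
    erw [EMAux.trans_cast hf₁.symm hf₁.symm rfl, EMAux.trans_cast hf₁.symm rfl rfl,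
      EMAux.path_cast_rfl] at h3
    have h4 : apAdd E n p (Path.refl (E.pt n)) = (p.map (((E.add n).comp
        ((ContinuousMap.id _).prodMk (ContinuousMap.const (E.K n) (E.pt n)))).continuous)).cast
        hf₁.symm hf₁.symm := by
      ext t; rfl
    show (⟦(apAdd E n p (Path.refl (E.pt n))).trans α⟧ :
      Path.Homotopic.Quotient (E.pt n) (E.pt n)) = ⟦α.trans p⟧
    rw [h4]
    exact Quotient.sound h3
  have R3 : ∀ v, μ (𝟙 _) v ≫ B = B ≫ v := by
    intro v
    induction v using Quotient.inductionOn with | h q => ?_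
    have h := EMAux.conj_free (X := TopCat.of (E.K n)) H₂ q
    have h2 : q.map (ContinuousMap.id (E.K n)).continuous = q := by ext t; rfl
    rw [h2] at h
    have h' : ((q.map (((E.add n).comp ((ContinuousMap.const (E.K n) (E.pt n)).prodMk
        (ContinuousMap.id _))).continuous)).trans
        (H₂.evalAt (E.pt n))).Homotopic ((H₂.evalAt (E.pt n)).trans q) := h
    have h3 := EMAux.homotopic_cast hf₂.symm rfl h'
    erw [EMAux.trans_cast hf₂.symm hf₂.symm rfl, EMAux.trans_cast hf₂.symm rfl rfl,
      EMAux.path_cast_rfl] at h3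
    have h4 : apAdd E n (Path.refl (E.pt n)) q = (q.map (((E.add n).comp
        ((ContinuousMap.const (E.K n) (E.pt n)).prodMk (ContinuousMap.id _))).continuous)).cast
        hf₂.symm hf₂.symm := by
      ext t; rfl
    show (⟦(apAdd E n (Path.refl (E.pt n)) q).trans β⟧ :
      Path.Homotopic.Quotient (E.pt n) (E.pt n)) = ⟦β.trans q⟧
    rw [h4]
    exact Quotient.sound h3
  have surjF : ∀ w, μ (Groupoid.inv A ≫ w ≫ A) (𝟙 _) = w := by
    intro w
    have h := R2 (Groupoid.inv A ≫ w ≫ A)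
    have h5 : μ (Groupoid.inv A ≫ w ≫ A) (𝟙 _) =
        (A ≫ (Groupoid.inv A ≫ w ≫ A)) ≫ Groupoid.inv A := by
      rw [← h]; simp
    rw [h5]; simp
  have surjG : ∀ w, μ (𝟙 _) (Groupoid.inv B ≫ w ≫ B) = w := by
    intro w
    have h := R3 (Groupoid.inv B ≫ w ≫ B)
    have h5 : μ (𝟙 _) (Groupoid.inv B ≫ w ≫ B) =
        (B ≫ (Groupoid.inv B ≫ w ≫ B)) ≫ Groupoid.inv B := by
      rw [← h]; simp
    rw [h5]; simp
  have key : ∀ u v, μ u (𝟙 _) ≫ μ (𝟙 _) v = μ (𝟙 _) v ≫ μ u (𝟙 _) := by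
    intro u v
    have h1 := hμc u (𝟙 _) (𝟙 _) v
    have h2 := hμc (𝟙 _) u v (𝟙 _)
    simp only [Category.id_comp, Category.comp_id] at h1 h2
    rw [← h1, ← h2]
  have comm : ∀ u v : (fromTop (X := TopCat.of (E.K n)) (E.pt n) ⟶ fromTop (E.pt n)),
      u ≫ v = v ≫ u := by
    intro u v
    rw [← surjF u, ← surjG v]
    exact key _ _
  refine ⟨?_, comm⟩
  have punit : ∀ u, μ u (𝟙 _) = u := by
    intro u
    have h := R2 u
    rw [comm A u] at h
    calc μ u (𝟙 _) = (μ u (𝟙 _) ≫ A) ≫ Groupoid.inv A := by simp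
      _ = (u ≫ A) ≫ Groupoid.inv A := by rw [h]
      _ = u := by simp
  have qunit : ∀ v, μ (𝟙 _) v = v := by
    intro v
    have h := R3 v
    rw [comm B v] at h
    calc μ (𝟙 _) v = (μ (𝟙 _) v ≫ B) ≫ Groupoid.inv B := by simp
      _ = (v ≫ B) ≫ Groupoid.inv B := by rw [h]
      _ = v := by simp
  have mul : ∀ u v, μ u v = u ≫ v := by
    intro u v
    have h := hμc u (𝟙 _) (𝟙 _) v
    simp only [Category.id_comp, Category.comp_id] at h
    rw [h, punit, qunit]
  intro p q
  have h := mul ⟦p⟧ ⟦q⟧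
  exact Quotient.exact h

end AuxProof

open FundamentalGroupoid CategoryTheory
attribute [local instance] Path.Homotopic.setoid

/-- For every abelian group `G`, `n ≥ 1`, and loops
`p, q : Ω K(G,n)`, applying the addition `+ₖ` to the pair of loops yields
`ap²₊ₖ(p,q) = p · q` (where `·` is path composition).  Consequently, for any
`x : K(G,n)` and any `p, q : x = x` one has `p · q = q · p`. -/
theorem ap_add_eq_trans (G : Type) [AddCommGroup G] (E : EMData G) (n : ℕ) (hn : 1 ≤ n) :
    (∀ p q : Path (E.pt n) (E.pt n), Path.Homotopic (apAdd E n p q) (p.trans q)) ∧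
    (∀ (x : E.K n) (p q : Path x x), Path.Homotopic (p.trans q) (q.trans p)) := by
  constructor
  · exact (EMAux.main E n).1
  · intro x p q
    obtain ⟨m, rfl⟩ : ∃ m, n = m + 1 := ⟨n - 1, by omega⟩
    haveI := E.conn m
    have γ : Path (E.pt (m + 1)) x := PathConnectedSpace.somePath _ _
    let c : (fromTop (X := TopCat.of (E.K (m+1))) (E.pt (m+1)) ⟶
        fromTop x) := ⟦γ⟧
    have comm := (EMAux.main E (m+1)).2
    let u : (fromTop (X := TopCat.of (E.K (m+1))) x ⟶ fromTop x) := ⟦p⟧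
    let v : (fromTop (X := TopCat.of (E.K (m+1))) x ⟶ fromTop x) := ⟦q⟧
    have hfinal : u ≫ v = v ≫ u := by
      have h1 : u ≫ v =
          CategoryTheory.Groupoid.inv c ≫
            ((c ≫ u ≫ CategoryTheory.Groupoid.inv c) ≫
             (c ≫ v ≫ CategoryTheory.Groupoid.inv c)) ≫ c := by
        simp
      rw [h1, comm]
      simp
    exact Quotient.exact hfinal
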